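/- The plane-wave u = a·exp(±i·√(3-2c/a²)·(x-ct)), with real constants a ≠ 0 and c ≤ (3/2)a², is a travelling-wave solution of the Hirota-type peakon equation v_t + (1/2)((|u|²-|u_x|²)v)_x + i·Im(ū u_x)v = 0, where v = u - u_xx. -/

import Mathlib

open Complex

noncomputable section

def pdt (f : ℝ → ℝ → ℂ) (t x : ℝ) : ℂ := deriv (fun s => f s x) t
def pdx (f : ℝ → ℝ → ℂ) (t x : ℝ) : ℂ := deriv (fun y => f t y) x

/-- Hirota-type peakon equation. -/
def HirotaEq (u v : ℝ → ℝ → ℂ) : Prop :=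
  ∀ t x : ℝ,
    pdt v t x
      + (1/2) * pdx (fun t x =>
          ((Complex.normSq (u t x) - Complex.normSq (pdx u t x) : ℝ) : ℂ) * v t x) t x
      + Complex.I * ((((starRingEnd ℂ) (u t x)) * pdx u t x).im : ℂ) * v t x = 0

lemma deriv_bexp (b m w : ℂ) (x : ℝ) :
    deriv (fun y : ℝ => b * Complex.exp (m * y + w)) x = b * m * Complex.exp (m * x + w) := by
  have h : HasDerivAt (fun y : ℝ => m * (y:ℂ) + w) m x := by
    simpa using ((Complex.ofRealCLM.hasDerivAt (x := x)).const_mul m).add_const w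
  rw [(h.cexp.const_mul b).deriv]; ring

theorem hirota_planewave_solution (a c ε : ℝ) (ha : a ≠ 0)
    (hc : c ≤ (3/2) * a^2) (hε : ε = 1 ∨ ε = -1)
    (u v : ℝ → ℝ → ℂ)
    (hu : ∀ t x : ℝ, u t x = (a : ℂ) *
      Complex.exp (Complex.I * ((ε * Real.sqrt (3 - 2*c/a^2) : ℝ) : ℂ) * ((x : ℂ) - (c : ℂ) * t)))
    (hv : ∀ t x : ℝ, v t x = u t x - pdx (pdx u) t x) :
    HirotaEq u v := by
  intro t x
  obtain ⟨kr, hkr⟩ : ∃ kr : ℝ, kr = ε * Real.sqrt (3 - 2*c/a^2) := ⟨_, rfl⟩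
  obtain ⟨m, hm⟩ : ∃ m : ℂ, m = Complex.I * (kr : ℂ) := ⟨_, rfl⟩
  have ha2 : (0:ℝ) < a^2 := by positivity
  have h3 : (0:ℝ) ≤ 3 - 2*c/a^2 := by
    have : 2*c/a^2 ≤ 3 := by rw [div_le_iff₀ ha2]; nlinarith
    linarith
  have hε2 : ε^2 = 1 := by rcases hε with h | h <;> rw [h] <;> norm_num
  have hk2 : kr^2 = 3 - 2*c/a^2 := by
    rw [hkr, mul_pow, hε2, one_mul, Real.sq_sqrt h3]
  have hak : (a:ℂ)^2 * (kr:ℂ)^2 = 3*(a:ℂ)^2 - 2*(c:ℂ) := by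
    have ha' : (a:ℂ) ≠ 0 := by exact_mod_cast ha
    have := congrArg (fun r : ℝ => (r:ℂ)) hk2
    push_cast at this
    field_simp at this
    linear_combination this
  -- u as exponential
  have hu' : ∀ s y : ℝ, u s y = (a:ℂ) * Complex.exp (m * y + (-(m*(c:ℂ)*s))) := by
    intro s y
    rw [hu s y]
    congr 2
    rw [hm, hkr]; push_cast; ring
  have hux : ∀ s y : ℝ, pdx u s y = m * u s y := by
    intro s y
    have e : (fun z : ℝ => u s z) = fun z : ℝ => (a:ℂ) * Complex.exp (m * z + (-(m*(c:ℂ)*s))) :=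
      funext fun z => hu' s z
    show deriv (fun z : ℝ => u s z) y = _
    rw [e, deriv_bexp, hu' s y]; ring
  have huxx : ∀ s y : ℝ, pdx (pdx u) s y = m^2 * u s y := by
    intro s y
    have e : (fun z : ℝ => pdx u s z)
        = fun z : ℝ => (m * (a:ℂ)) * Complex.exp (m * z + (-(m*(c:ℂ)*s))) :=
      funext fun z => by rw [hux s z, hu' s z]; ring
    show deriv (fun z : ℝ => pdx u s z) y = _
    rw [e, deriv_bexp, hu' s y]; ring
  have hv' : ∀ s y : ℝ, v s y = (1 - m^2) * u s y := by
    intro s y; rw [hv s y, huxx s y]; ring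
  -- time derivative of v
  have hvt : pdt v t x = (1 - m^2) * (-(m*(c:ℂ))) * u t x := by
    have e : (fun s : ℝ => v s x)
        = fun s : ℝ => ((1 - m^2) * (a:ℂ)) * Complex.exp ((-(m*(c:ℂ))) * s + m * x) :=
      funext fun s => by
        rw [hv' s x, hu' s x, show m * (x:ℂ) + -(m*(c:ℂ)*s) = (-(m*(c:ℂ))) * s + m * x from by ring]; ring
    show deriv (fun s : ℝ => v s x) t = _
    rw [e, deriv_bexp, hu' t x,
      show (-(m*(c:ℂ))) * t + m * (x:ℂ) = m * x + -(m*(c:ℂ)*t) from by ring]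
    ring
  -- norms
  have hnorm : ∀ s y : ℝ, Complex.normSq (u s y) = a^2 := by
    intro s y
    rw [hu s y, Complex.normSq_mul, Complex.normSq_ofReal,
      show Complex.I * ((ε * Real.sqrt (3 - 2*c/a^2) : ℝ) : ℂ) * ((y:ℂ) - (c:ℂ)*s)
        = ((kr * (y - c*s) : ℝ) : ℂ) * Complex.I from by rw [hkr]; push_cast; ring]
    rw [← Complex.sq_norm, Complex.norm_exp_ofReal_mul_I]
    ring
  have hnormx : ∀ s y : ℝ, Complex.normSq (pdx u s y) = kr^2 * a^2 := by
    intro s y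
    rw [hux s y, Complex.normSq_mul, hnorm s y, hm, Complex.normSq_mul, Complex.normSq_I,
      Complex.normSq_ofReal]
    ring
  -- middle term
  have hmid : pdx (fun t x =>
      ((Complex.normSq (u t x) - Complex.normSq (pdx u t x) : ℝ) : ℂ) * v t x) t x
      = ((a^2 - kr^2*a^2 : ℝ) : ℂ) * (1 - m^2) * m * u t x := by
    have e : (fun y : ℝ => ((Complex.normSq (u t y) - Complex.normSq (pdx u t y) : ℝ) : ℂ) * v t y)
        = fun y : ℝ => (((a^2 - kr^2*a^2 : ℝ) : ℂ) * (1 - m^2) * (a:ℂ))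
            * Complex.exp (m * y + (-(m*(c:ℂ)*t))) :=
      funext fun y => by rw [hnorm t y, hnormx t y, hv' t y, hu' t y]; ring
    show deriv _ x = _
    rw [e, deriv_bexp, hu' t x]; ring
  -- imaginary part term
  have him : (((starRingEnd ℂ) (u t x)) * pdx u t x).im = kr * a^2 := by
    rw [hux t x,
      show (starRingEnd ℂ) (u t x) * (m * u t x) = m * ((starRingEnd ℂ) (u t x) * u t x) from by ring,
      Complex.conj_mul', hm]
    have h2 : ‖u t x‖^2 = a^2 := by rw [Complex.sq_norm, hnorm]
    rw [← Complex.ofReal_pow, h2]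
    simp only [Complex.mul_im, Complex.mul_re, Complex.I_re, Complex.I_im,
      Complex.ofReal_re, Complex.ofReal_im]
    ring
  show _ + _ + _ = (0:ℂ)
  rw [hvt, hmid, him, hv' t x]
  have key : (-(m*(c:ℂ))) + (1/2) * (((a^2 - kr^2*a^2 : ℝ) : ℂ) * m)
      + Complex.I * ((kr * a^2 : ℝ) : ℂ) = 0 := by
    rw [hm]; push_cast
    linear_combination (-(1/2:ℂ) * Complex.I * (kr:ℂ)) * hak
  push_cast at key ⊢
  linear_combination ((1 - m^2) * u t x) * key
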